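/- arXiv:1506.05044 — 2 statements merged into one kernel-verified Lean document; each statement's English description precedes it below -/
import Mathlib

section
/- The map Γ : D([0,T];ℝ²) → D([0,T];ℝ²) defined by Γ(f)(t) = f(t) − g_f(t)·e₁, where g_f(t) = sup_{0≤u≤t} (2β − (f₁(u)+f₂(u)))⁻ and e₁ = (1,0), is Lipschitz continuous with respect to the uniform norm: there is a constant C (one may take C = 1+√2) such that for all f, f̃ in D([0,T];ℝ²), sup_{t∈[0,T]} ‖Γ(f)(t) − Γ(f̃)(t)‖ ≤ C · sup_{t∈[0,T]} ‖f(t) − f̃(t)‖. -/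
noncomputable section

/-- Negative part of a real number: `x⁻ = max (-x) 0`. -/
def negp (x : ℝ) : ℝ := max (-x) 0

/-- The first standard basis vector of `ℝ²`. -/
def e1 : EuclideanSpace ℝ (Fin 2) := EuclideanSpace.single 0 1

/-- `g_f(t) = sup_{0 ≤ u ≤ t} (2β − (f₁(u) + f₂(u)))⁻`. -/
def gmap (β : ℝ) (f : ℝ → EuclideanSpace ℝ (Fin 2)) (t : ℝ) : ℝ :=
  ⨆ u : Set.Icc (0 : ℝ) t, negp (2 * β - (f u 0 + f u 1))

/-- `Γ(f)(t) = f(t) − g_f(t)·e₁`. -/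
def Gam (β : ℝ) (f : ℝ → EuclideanSpace ℝ (Fin 2)) (t : ℝ) : EuclideanSpace ℝ (Fin 2) :=
  f t - gmap β f t • e1

/-- `f` is càdlàg on `[0, T]`: right-continuous on `[0,T)` and with left limits on `(0,T]`. -/
def IsCadlagOn {E : Type*} [TopologicalSpace E] (f : ℝ → E) (T : ℝ) : Prop :=
  (∀ t ∈ Set.Ico (0 : ℝ) T, ContinuousWithinAt f (Set.Ici t) t) ∧
  (∀ t ∈ Set.Ioc (0 : ℝ) T, ∃ l, Filter.Tendsto f (nhdsWithin t (Set.Iio t)) (nhds l))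

open Filter Set Topology

lemma negp_le_abs (x : ℝ) : negp x ≤ |x| :=
  max_le (neg_le_abs x) (abs_nonneg x)

lemma negp_lip (a b : ℝ) : negp a ≤ negp b + |a - b| := by
  unfold negp
  have h1 : -b ≤ max (-b) 0 := le_max_left _ _
  have h2 : -(a - b) ≤ |a - b| := neg_le_abs _
  refine max_le (by linarith) ?_
  have := abs_nonneg (a - b)
  have := le_max_right (-b) (0 : ℝ)
  linarith

lemma sum_le_sqrt_two (x : EuclideanSpace ℝ (Fin 2)) :
    |x 0 + x 1| ≤ Real.sqrt 2 * ‖x‖ := by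
  have hn : ‖x‖ = Real.sqrt (|x 0| ^ 2 + |x 1| ^ 2) := by
    rw [EuclideanSpace.norm_eq, Fin.sum_univ_two]
    norm_num
  have key : |x 0 + x 1| = Real.sqrt ((x 0 + x 1) ^ 2) := (Real.sqrt_sq_eq_abs _).symm
  rw [key, hn, ← Real.sqrt_mul (by norm_num : (2:ℝ) ≥ 0)]
  apply Real.sqrt_le_sqrt
  have := sq_abs (x 0)
  have := sq_abs (x 1)
  nlinarith [sq_nonneg (x 0 - x 1)]

/-- A càdlàg function on `[0,T]` is bounded on `[0,T]`. -/
lemma cadlag_bounded {E : Type*} [NormedAddCommGroup E] {f : ℝ → E} {T : ℝ} (hT : 0 < T)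
    (hf : IsCadlagOn f T) : ∃ M : ℝ, ∀ t ∈ Set.Icc (0:ℝ) T, ‖f t‖ ≤ M := by
  have key : ∀ t : ℝ, ∃ M : ℝ, ∀ᶠ s in 𝓝 t, s ∈ Set.Icc (0:ℝ) T → ‖f s‖ ≤ M := by
    intro t
    by_cases ht : t ∈ Set.Icc (0:ℝ) T
    · -- right part
      have hright : ∃ Mr : ℝ, ∀ᶠ s in 𝓝[≥] t, s ∈ Set.Icc (0:ℝ) T → ‖f s‖ ≤ Mr := by
        rcases eq_or_lt_of_le ht.2 with h | h
        · refine ⟨‖f t‖, ?_⟩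
          filter_upwards [self_mem_nhdsWithin] with s hs hs'
          have : s = t := le_antisymm (h ▸ hs'.2) hs
          rw [this]
        · have h1 : Filter.Tendsto f (𝓝[≥] t) (𝓝 (f t)) := hf.1 t ⟨ht.1, h⟩
          have h2 := (Metric.tendsto_nhds.1 h1) 1 one_pos
          refine ⟨‖f t‖ + 1, ?_⟩
          filter_upwards [h2] with s hs _
          rw [dist_eq_norm] at hs
          have := norm_sub_norm_le (f s) (f t)
          linarith
      have hleft : ∃ Ml : ℝ, ∀ᶠ s in 𝓝[<] t, s ∈ Set.Icc (0:ℝ) T → ‖f s‖ ≤ Ml := by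
        rcases eq_or_lt_of_le ht.1 with h | h
        · refine ⟨0, ?_⟩
          filter_upwards [self_mem_nhdsWithin] with s hs hs'
          exact absurd (lt_of_lt_of_le hs (le_of_eq h.symm)) (not_lt.2 hs'.1)
        · obtain ⟨l, hl⟩ := hf.2 t ⟨h, ht.2⟩
          have h2 := (Metric.tendsto_nhds.1 hl) 1 one_pos
          refine ⟨‖l‖ + 1, ?_⟩
          filter_upwards [h2] with s hs _
          rw [dist_eq_norm] at hs
          have := norm_sub_norm_le (f s) l
          linarith
      obtain ⟨Mr, hMr⟩ := hright
      obtain ⟨Ml, hMl⟩ := hleft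
      refine ⟨max Mr Ml, ?_⟩
      rw [← nhdsLT_sup_nhdsGE t, Filter.eventually_sup]
      constructor
      · filter_upwards [hMl] with s hs hs'
        exact (hs hs').trans (le_max_right _ _)
      · filter_upwards [hMr] with s hs hs'
        exact (hs hs').trans (le_max_left _ _)
    · refine ⟨0, ?_⟩
      have : (Set.Icc (0:ℝ) T)ᶜ ∈ 𝓝 t := (isClosed_Icc.isOpen_compl).mem_nhds ht
      filter_upwards [this] with s hs hs'
      exact absurd hs' hs
  choose M hM using key
  have hcov := (isCompact_Icc (a := (0:ℝ)) (b := T)).elim_nhds_subcover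
    (fun t => {s | s ∈ Set.Icc (0:ℝ) T → ‖f s‖ ≤ M t}) (fun t _ => hM t)
  obtain ⟨fs, _, hfs⟩ := hcov
  have hne : fs.Nonempty := by
    rcases Finset.eq_empty_or_nonempty fs with h | h
    · exfalso
      have h0 : (0:ℝ) ∈ Set.Icc (0:ℝ) T := ⟨le_refl _, hT.le⟩
      have := hfs h0
      simp [h] at this
    · exact h
  refine ⟨fs.sup' hne M, ?_⟩
  intro s hs
  have := hfs hs
  simp only [Set.mem_iUnion] at this
  obtain ⟨x, hx, hsx⟩ := this
  exact (hsx hs).trans (Finset.le_sup' M hx)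

lemma gmap_sub_le (β : ℝ) {f ftil : ℝ → EuclideanSpace ℝ (Fin 2)} {T t : ℝ}
    (ht : t ∈ Set.Icc (0:ℝ) T) {Mft : ℝ}
    (hMft : ∀ s ∈ Set.Icc (0:ℝ) T, ‖ftil s‖ ≤ Mft) {K : ℝ}
    (hK : ∀ s ∈ Set.Icc (0:ℝ) T, ‖f s - ftil s‖ ≤ K) :
    gmap β f t ≤ gmap β ftil t + Real.sqrt 2 * K := by
  haveI : Nonempty (Set.Icc (0:ℝ) t) := ⟨⟨0, le_refl _, ht.1⟩⟩
  have hbdd : BddAbove (Set.range fun u : Set.Icc (0:ℝ) t =>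
      negp (2 * β - (ftil u 0 + ftil u 1))) := by
    refine ⟨|2 * β| + Real.sqrt 2 * Mft, ?_⟩
    rintro x ⟨u, rfl⟩
    have huT : (u:ℝ) ∈ Set.Icc (0:ℝ) T := ⟨u.2.1, u.2.2.trans ht.2⟩
    calc negp (2 * β - (ftil u 0 + ftil u 1)) ≤ |2 * β - (ftil u 0 + ftil u 1)| :=
          negp_le_abs _
      _ ≤ |2 * β| + |ftil u 0 + ftil u 1| := abs_sub _ _
      _ ≤ |2 * β| + Real.sqrt 2 * ‖ftil u‖ := by
          linarith [sum_le_sqrt_two (ftil u)]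
      _ ≤ |2 * β| + Real.sqrt 2 * Mft := by
          have h2 : (0:ℝ) ≤ Real.sqrt 2 := Real.sqrt_nonneg 2
          nlinarith [hMft u huT]
  apply ciSup_le
  intro u
  have huT : (u:ℝ) ∈ Set.Icc (0:ℝ) T := ⟨u.2.1, u.2.2.trans ht.2⟩
  have h1 : negp (2 * β - (f u 0 + f u 1)) ≤ negp (2 * β - (ftil u 0 + ftil u 1)) +
      |(2 * β - (f u 0 + f u 1)) - (2 * β - (ftil u 0 + ftil u 1))| := negp_lip _ _
  have h2 : |(2 * β - (f u 0 + f u 1)) - (2 * β - (ftil u 0 + ftil u 1))| =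
      |(f u - ftil u) 0 + (f u - ftil u) 1| := by
    have e0 : (f u - ftil u) 0 = f u 0 - ftil u 0 := rfl
    have e1' : (f u - ftil u) 1 = f u 1 - ftil u 1 := rfl
    rw [e0, e1', show (2 * β - (f u 0 + f u 1)) - (2 * β - (ftil u 0 + ftil u 1)) =
      (ftil u 0 + ftil u 1) - (f u 0 + f u 1) by ring, abs_sub_comm]
    congr 1
    ring
  have h3 : |(f u - ftil u) 0 + (f u - ftil u) 1| ≤ Real.sqrt 2 * ‖f u - ftil u‖ :=
    sum_le_sqrt_two _
  have h4 : Real.sqrt 2 * ‖f u - ftil u‖ ≤ Real.sqrt 2 * K := by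
    have h2' : (0:ℝ) ≤ Real.sqrt 2 := Real.sqrt_nonneg 2
    nlinarith [hK u huT]
  have h5 : negp (2 * β - (ftil u 0 + ftil u 1)) ≤ gmap β ftil t :=
    le_ciSup hbdd u
  calc negp (2 * β - (f u 0 + f u 1)) ≤ negp (2 * β - (ftil u 0 + ftil u 1)) +
        Real.sqrt 2 * K := by rw [h2] at h1; linarith
    _ ≤ gmap β ftil t + Real.sqrt 2 * K := by linarith

/-- The map `Γ` is Lipschitz for the uniform norm on `D([0,T];ℝ²)`, with constant `1 + √2`. -/
theorem gamma_lipschitz (β T : ℝ) (hβ : 0 < β) (hT : 0 < T)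
    (f ftil : ℝ → EuclideanSpace ℝ (Fin 2))
    (hf : IsCadlagOn f T) (hftil : IsCadlagOn ftil T) :
    (⨆ t : Set.Icc (0 : ℝ) T, ‖Gam β f t - Gam β ftil t‖) ≤
      (1 + Real.sqrt 2) * ⨆ t : Set.Icc (0 : ℝ) T, ‖f t - ftil t‖ := by
  obtain ⟨Mf, hMf⟩ := cadlag_bounded hT hf
  obtain ⟨Mft, hMft⟩ := cadlag_bounded hT hftil
  haveI : Nonempty (Set.Icc (0:ℝ) T) := ⟨⟨0, le_refl _, hT.le⟩⟩
  set K := ⨆ t : Set.Icc (0 : ℝ) T, ‖f t - ftil t‖ with hKdef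
  have hbddK : BddAbove (Set.range fun t : Set.Icc (0:ℝ) T => ‖f t - ftil t‖) := by
    refine ⟨Mf + Mft, ?_⟩
    rintro x ⟨u, rfl⟩
    calc ‖f u - ftil u‖ ≤ ‖f u‖ + ‖ftil u‖ := norm_sub_le _ _
      _ ≤ Mf + Mft := add_le_add (hMf u u.2) (hMft u u.2)
  have hKle : ∀ s ∈ Set.Icc (0:ℝ) T, ‖f s - ftil s‖ ≤ K := by
    intro s hs
    exact le_ciSup hbddK ⟨s, hs⟩
  have hK0 : 0 ≤ K := le_trans (norm_nonneg _) (hKle 0 ⟨le_refl _, hT.le⟩)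
  apply ciSup_le
  intro t
  have ht : (t:ℝ) ∈ Set.Icc (0:ℝ) T := t.2
  have hg1 : gmap β f t ≤ gmap β ftil t + Real.sqrt 2 * K := gmap_sub_le β ht hMft hKle
  have hg2 : gmap β ftil t ≤ gmap β f t + Real.sqrt 2 * K := by
    refine gmap_sub_le β ht hMf ?_
    intro s hs
    rw [norm_sub_rev]
    exact hKle s hs
  have habs : |gmap β f t - gmap β ftil t| ≤ Real.sqrt 2 * K := abs_sub_le_iff.2 ⟨by linarith, by linarith⟩
  have hdecomp : Gam β f t - Gam β ftil t =
      (f t - ftil t) - (gmap β f t - gmap β ftil t) • e1 := by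
    simp only [Gam, sub_smul]
    abel
  have he1 : ‖e1‖ = 1 := by
    simp [e1, EuclideanSpace.norm_single]
  calc ‖Gam β f t - Gam β ftil t‖
      ≤ ‖f t - ftil t‖ + ‖(gmap β f t - gmap β ftil t) • e1‖ := by
        rw [hdecomp]; exact norm_sub_le _ _
    _ = ‖f t - ftil t‖ + |gmap β f t - gmap β ftil t| := by
        rw [norm_smul, he1, Real.norm_eq_abs, mul_one]
    _ ≤ K + Real.sqrt 2 * K := add_le_add (hKle t ht) habs
    _ = (1 + Real.sqrt 2) * K := by ring
end
end

section
/- Fix n ∈ ℕ, a ∈ (0,1/2), m = m_n = ⌊n^a⌋, τ = m/n. Define E^n : [0,∞) → ℤ≥0 on [0,τ] by E^n(t) = 0 for t ∈ [0, τ/2), E^n(t) = ⌊2n(t − τ/2)+2⌋ for t ∈ [τ/2, τ), E^n(τ) = m, and extend periodically by E^n(t + jτ) = E^n(jτ) + E^n(t) for t ∈ (0, τ], j ∈ ℕ. Then sup_{t∈[0,T]} |E^n(t) − n t| ≤ m + 3 for every T > 0 that is a multiple of τ; consequently n^{−1/2} sup_{t∈[0,T]} |E^n(t) − n t| → 0 as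 n → ∞ for every fixed T, i.e., the scaled processes n^{−1/2}(E^n(t) − n t) converge to 0 uniformly on compacts. -/
open Filter

/-- For the periodic class-2 arrival pattern `Eⁿ` with `m_n = ⌊n^a⌋` arrivals per period
`τ_n = m_n/n`: the deviation from the line `t ↦ n t` is at most `m_n + 3` on every horizon
that is a multiple of the period, and consequently the diffusion-scaled processes
`n^{-1/2}(Eⁿ(t) − n t)` converge to `0` uniformly on compacts. -/
theorem periodic_arrival_lln (a : ℝ) (ha : 0 < a) (ha' : a < 1 / 2)
    (E : ℕ → ℝ → ℤ) (m : ℕ → ℕ) (τ : ℕ → ℝ)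
    (hm : ∀ n, m n = ⌊(n : ℝ) ^ a⌋₊)
    (hτ : ∀ n, τ n = (m n : ℝ) / n)
    (h0 : ∀ n, 0 < n → ∀ t, 0 ≤ t → t < τ n / 2 → E n t = 0)
    (h1 : ∀ n, 0 < n → ∀ t, τ n / 2 ≤ t → t < τ n →
      E n t = ⌊2 * (n : ℝ) * (t - τ n / 2) + 2⌋)
    (h2 : ∀ n, 0 < n → E n (τ n) = m n)
    (hper : ∀ n, 0 < n → ∀ j : ℕ, ∀ t, 0 < t → t ≤ τ n →
      E n (t + j * τ n) = E n (j * τ n) + E n t) :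
    (∀ n, 0 < n → ∀ j : ℕ, ∀ t, 0 ≤ t → t ≤ j * τ n →
      |(E n t : ℝ) - n * t| ≤ m n + 3) ∧
    (∀ T : ℝ, 0 < T →
      Tendsto (fun n : ℕ =>
          (Real.sqrt n)⁻¹ * ⨆ t : Set.Icc (0 : ℝ) T, |(E n t : ℝ) - n * t|)
        atTop (nhds 0)) := by
  have key : ∀ n, 0 < n → ∀ t, 0 ≤ t → |(E n t : ℝ) - n * t| ≤ m n + 3 := by
    intro n hn
    have hn1 : (1:ℝ) ≤ n := by exact_mod_cast hn
    have hnpos : (0:ℝ) < n := by exact_mod_cast hn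
    have hm1 : 1 ≤ m n := by
      rw [hm]
      apply Nat.le_floor
      calc ((1:ℕ):ℝ) = 1 ^ a := by rw [Real.one_rpow]; norm_num
        _ ≤ (n:ℝ) ^ a := Real.rpow_le_rpow zero_le_one hn1 ha.le
    have hmpos : (0:ℝ) < m n := by exact_mod_cast hm1
    have hτ0 : 0 < τ n := by rw [hτ]; positivity
    have hnτ : (n:ℝ) * τ n = m n := by rw [hτ]; field_simp
    have hA : ∀ t, 0 ≤ t → t ≤ τ n → |(E n t : ℝ) - n * t| ≤ m n + 3 := by
      intro t ht0 htτ
      have hub : (n:ℝ) * t ≤ (m n : ℝ) := by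
        rw [← hnτ]; exact mul_le_mul_of_nonneg_left htτ hnpos.le
      have hlb : (0:ℝ) ≤ (n:ℝ) * t := by positivity
      rcases lt_or_ge t (τ n / 2) with h | h
      · rw [h0 n hn t ht0 h]
        simp only [Int.cast_zero]
        rw [abs_le]
        constructor <;> linarith
      · rcases lt_or_ge t (τ n) with h' | h'
        · rw [h1 n hn t h h']
          have hfl := Int.floor_le (2*(n:ℝ)*(t - τ n/2) + 2)
          have hfl2 := Int.lt_floor_add_one (2*(n:ℝ)*(t - τ n/2) + 2)
          have hexp : 2*(n:ℝ)*(t - τ n/2) = 2*((n:ℝ)*t) - (n:ℝ) * τ n := by ring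
          have hmid : (n:ℝ) * (τ n / 2) ≤ (n:ℝ) * t :=
            mul_le_mul_of_nonneg_left h hnpos.le
          have hmid' : (n:ℝ) * (τ n / 2) = (m n : ℝ) / 2 := by
            rw [← mul_div_assoc, hnτ]
          rw [abs_le]
          constructor <;> nlinarith
        · have ht : t = τ n := le_antisymm htτ h'
          rw [ht, h2 n hn, hnτ]
          simp
          positivity
    have hB : ∀ j : ℕ, E n ((j : ℝ) * τ n) = (j * m n : ℤ) := by
      intro j
      induction j with
      | zero => simpa using h0 n hn 0 le_rfl (by linarith)
      | succ j ih =>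
        have hp := hper n hn j (τ n) hτ0 le_rfl
        have harg : τ n + (j:ℝ) * τ n = ((j+1 : ℕ):ℝ) * τ n := by push_cast; ring
        rw [harg] at hp
        rw [hp, ih, h2 n hn]
        push_cast; ring
    intro t ht0
    rcases eq_or_lt_of_le ht0 with h | h
    · exact hA t ht0 (by linarith)
    set k : ℕ := ⌈t / τ n⌉₊ - 1 with hk
    have hc1 : 1 ≤ ⌈t / τ n⌉₊ := Nat.one_le_ceil_iff.mpr (by positivity)
    have hkc : (k:ℝ) = (⌈t / τ n⌉₊ : ℝ) - 1 := by
      rw [hk, Nat.cast_sub hc1]; norm_num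
    have hceil_lt : (⌈t / τ n⌉₊ : ℝ) < t / τ n + 1 := Nat.ceil_lt_add_one (by positivity)
    have hle : t / τ n ≤ (⌈t / τ n⌉₊ : ℝ) := Nat.le_ceil _
    have hklt : (k:ℝ) * τ n < t := by
      rw [hkc]
      have : ((⌈t / τ n⌉₊ : ℝ) - 1) < t / τ n := by linarith
      exact (lt_div_iff₀ hτ0).mp this
    have htk : t ≤ ((k:ℝ) + 1) * τ n := by
      rw [hkc]
      have := (div_le_iff₀ hτ0).mp hle
      linarith
    set s := t - (k:ℝ) * τ n with hs
    have hspos : 0 < s := by simp only [hs]; linarith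
    have hsle : s ≤ τ n := by simp only [hs]; linarith
    have hts : t = s + (k:ℝ) * τ n := by rw [hs]; ring
    have hE := hper n hn k s hspos hsle
    rw [← hts, hB k] at hE
    have habs : (E n t : ℝ) - n * t = (E n s : ℝ) - n * s := by
      rw [hE]
      push_cast
      linear_combination (-(k:ℝ)) * hnτ + (-(n:ℝ)) * hts
    rw [habs]
    exact hA s hspos.le hsle
  constructor
  · intro n hn j t ht0 _
    exact key n hn t ht0
  intro T hT
  have hlow : ∀ᶠ n : ℕ in atTop,
      (0:ℝ) ≤ (Real.sqrt n)⁻¹ * ⨆ t : Set.Icc (0 : ℝ) T, |(E n t : ℝ) - n * t| := by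
    filter_upwards with n
    have : (0:ℝ) ≤ ⨆ t : Set.Icc (0 : ℝ) T, |(E n t : ℝ) - n * t| :=
      Real.iSup_nonneg fun i => abs_nonneg _
    positivity
  have hub : ∀ᶠ n : ℕ in atTop,
      (Real.sqrt n)⁻¹ * (⨆ t : Set.Icc (0 : ℝ) T, |(E n t : ℝ) - n * t|)
        ≤ (n:ℝ)^(a - 1/2) + 3 * (n:ℝ)^(-(1/2:ℝ)) := by
    filter_upwards [eventually_gt_atTop 0] with n hn
    have hnpos : (0:ℝ) < n := by exact_mod_cast hn
    have hsup : (⨆ t : Set.Icc (0:ℝ) T, |(E n t:ℝ) - n*t|) ≤ (m n : ℝ) + 3 := by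
      apply Real.iSup_le _ (by positivity)
      rintro ⟨t, ht0, htT⟩
      exact key n hn t ht0
    have hmb : (m n : ℝ) ≤ (n:ℝ)^a := by
      rw [hm]; exact Nat.floor_le (by positivity)
    have hsqrt : Real.sqrt n = (n:ℝ)^((1:ℝ)/2) := Real.sqrt_eq_rpow _
    calc (Real.sqrt n)⁻¹ * (⨆ t : Set.Icc (0:ℝ) T, |(E n t:ℝ) - n*t|)
        ≤ (Real.sqrt n)⁻¹ * ((n:ℝ)^a + 3) := by
          apply mul_le_mul_of_nonneg_left _ (by positivity)
          linarith
      _ = (n:ℝ)^(a - 1/2) + 3 * (n:ℝ)^(-(1/2:ℝ)) := by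
          rw [hsqrt, ← Real.rpow_neg (by positivity), mul_add,
            ← Real.rpow_add hnpos]
          ring_nf
  have hlim : Tendsto (fun n : ℕ => (n:ℝ)^(a - 1/2) + 3 * (n:ℝ)^(-(1/2:ℝ)))
      atTop (nhds 0) := by
    have h1 : Tendsto (fun n : ℕ => (n:ℝ)^(a - 1/2)) atTop (nhds 0) := by
      have h := (tendsto_rpow_neg_atTop (by linarith : (0:ℝ) < 1/2 - a)).comp
        tendsto_natCast_atTop_atTop
      simpa [Function.comp_def, neg_sub] using h
    have h2 : Tendsto (fun n : ℕ => (n:ℝ)^(-(1/2:ℝ))) atTop (nhds 0) := by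
      have h := (tendsto_rpow_neg_atTop (by norm_num : (0:ℝ) < 1/2)).comp
        tendsto_natCast_atTop_atTop
      simpa [Function.comp_def] using h
    simpa using h1.add (h2.const_mul 3)
  exact tendsto_of_tendsto_of_tendsto_of_le_of_le' tendsto_const_nhds hlim hlow hub
end
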